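/- Let J := ∫_{[0,1]³} (1 − (u + v + w))·𝟙_{u+v+w ≤ 1}/(uv + uw + vw) du dv dw. Then lim_{n→∞} n^{−2} · ∑_{(k₁, m₀, m₁, m₂)} 1/(m₀m₁ + m₀m₂ + m₁m₂) = J, where the sum ranges over all quadruples of positive integers (k₁, m₀, m₁, m₂) with k₁ + m₀ + m₁ + m₂ ≤ n. -/

import Mathlib

open MeasureTheory Filter

noncomputable section

namespace SumInvJ

open Set

/-- The integrand in `max` form. -/
def f (p : ℝ × ℝ × ℝ) : ℝ :=
  max (1 - (p.1 + p.2.1 + p.2.2)) 0 / (p.1 * p.2.1 + p.1 * p.2.2 + p.2.1 * p.2.2)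

/-- The open positive octant. -/
def S : Set (ℝ × ℝ × ℝ) := Set.Ioi 0 ×ˢ Set.Ioi 0 ×ˢ Set.Ioi 0

lemma mem_S {p : ℝ × ℝ × ℝ} : p ∈ S ↔ 0 < p.1 ∧ 0 < p.2.1 ∧ 0 < p.2.2 := by
  simp [S, Set.mem_prod]

lemma measurableSet_S : MeasurableSet S :=
  measurableSet_Ioi.prod (measurableSet_Ioi.prod measurableSet_Ioi)

lemma Q_pos {p : ℝ × ℝ × ℝ} (hp : p ∈ S) :
    0 < p.1 * p.2.1 + p.1 * p.2.2 + p.2.1 * p.2.2 := by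
  rw [mem_S] at hp
  have := hp.1; have := hp.2.1; have := hp.2.2
  positivity

lemma f_nonneg {p : ℝ × ℝ × ℝ} (hp : p ∈ S) : 0 ≤ f p :=
  div_nonneg (le_max_right _ _) (Q_pos hp).le

lemma measurable_f : Measurable f := by
  unfold f
  fun_prop

lemma f_anti {p q : ℝ × ℝ × ℝ} (hp : p ∈ S) (h1 : p.1 ≤ q.1) (h2 : p.2.1 ≤ q.2.1)
    (h3 : p.2.2 ≤ q.2.2) : f q ≤ f p := by
  rw [mem_S] at hp
  obtain ⟨a, b, c⟩ := hp
  apply div_le_div₀ (le_max_right _ _) _ (Q_pos (mem_S.2 ⟨a, b, c⟩)) _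
  · exact max_le_max (by linarith) le_rfl
  · have h1' := a.le.trans h1
    have h2' := b.le.trans h2
    have h3' := c.le.trans h3
    gcongr <;> linarith

lemma f_continuousAt {p : ℝ × ℝ × ℝ} (hp : p ∈ S) : ContinuousAt f p := by
  apply ContinuousAt.div
  · fun_prop
  · fun_prop
  · exact (Q_pos hp).ne'

lemma f_eq_zero {p : ℝ × ℝ × ℝ} (hs : 1 < p.1 + p.2.1 + p.2.2) : f p = 0 := by
  rw [f, max_eq_right (by linarith), zero_div]

/-- AM-GM bound on `S`. -/
lemma f_le_rpow {p : ℝ × ℝ × ℝ} (hp : p ∈ S) :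
    f p ≤ p.1 ^ (-(2:ℝ)/3) * (p.2.1 ^ (-(2:ℝ)/3) * p.2.2 ^ (-(2:ℝ)/3)) := by
  rw [mem_S] at hp
  obtain ⟨a, b, c⟩ := hp
  set u := p.1; set v := p.2.1; set w := p.2.2
  have hQ : 0 < u * v + u * w + v * w := by positivity
  have key : (u * v * w) ^ ((2:ℝ)/3) ≤ u * v + u * w + v * w := by
    have := Real.geom_mean_le_arith_mean3_weighted (by norm_num : (0:ℝ) ≤ 1/3)
      (by norm_num : (0:ℝ) ≤ 1/3) (by norm_num : (0:ℝ) ≤ 1/3)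
      (by positivity : (0:ℝ) ≤ u*v) (by positivity : (0:ℝ) ≤ u*w)
      (by positivity : (0:ℝ) ≤ v*w) (by norm_num)
    have heq : (u*v) ^ ((1:ℝ)/3) * (u*w) ^ ((1:ℝ)/3) * (v*w) ^ ((1:ℝ)/3)
        = (u*v*w) ^ ((2:ℝ)/3) := by
      rw [← Real.mul_rpow (by positivity) (by positivity),
        ← Real.mul_rpow (by positivity) (by positivity)]
      rw [show u*v*(u*w)*(v*w) = (u*v*w)^(2:ℕ) by ring,
        ← Real.rpow_natCast (u*v*w) 2, ← Real.rpow_mul (by positivity)]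
      norm_num
    nlinarith [heq ▸ this, hQ]
  have h1 : f p ≤ 1 / (u * v + u * w + v * w) := by
    apply div_le_div₀ (by norm_num) _ hQ le_rfl
    have : u + v + w ≥ 0 := by positivity
    apply max_le (by linarith) (by norm_num)
  have h2 : (1:ℝ) / (u * v + u * w + v * w) ≤ (u*v*w) ^ (-(2:ℝ)/3) := by
    rw [show (-(2:ℝ)/3) = -((2:ℝ)/3) by norm_num, Real.rpow_neg (by positivity)]
    rw [div_le_iff₀ hQ, inv_mul_eq_div, le_div_iff₀ (by positivity : (0:ℝ) < (u*v*w) ^ ((2:ℝ)/3))]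
    linarith [key]
  calc f p ≤ (u*v*w) ^ (-(2:ℝ)/3) := h1.trans h2
    _ = u ^ (-(2:ℝ)/3) * (v ^ (-(2:ℝ)/3) * w ^ (-(2:ℝ)/3)) := by
        rw [← Real.mul_rpow (by positivity) (by positivity),
          ← Real.mul_rpow (by positivity) (by positivity), mul_assoc]

/-! ### Integrability -/

def h (u : ℝ) : ℝ := (Set.Ioc (0:ℝ) 1).indicator (fun u => u ^ (-(2:ℝ)/3)) u

lemma h_nonneg (u : ℝ) : 0 ≤ h u := by
  unfold h
  apply Set.indicator_nonneg
  intro x hx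
  exact Real.rpow_nonneg hx.1.le _

lemma integrable_h : Integrable h := by
  unfold h
  rw [integrable_indicator_iff measurableSet_Ioc]
  refine IntegrableOn.congr_set_ae ?_ (Ioo_ae_eq_Ioc (a := (0:ℝ)) (b := 1)).symm
  exact (intervalIntegral.integrableOn_Ioo_rpow_iff zero_lt_one).2 (by norm_num)

def g (p : ℝ × ℝ × ℝ) : ℝ := h p.1 * (h p.2.1 * h p.2.2)

lemma g_nonneg (p : ℝ × ℝ × ℝ) : 0 ≤ g p :=
  mul_nonneg (h_nonneg _) (mul_nonneg (h_nonneg _) (h_nonneg _))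

lemma integrable_g : Integrable g := by
  have h2 : Integrable (fun y : ℝ × ℝ => h y.1 * h y.2) := by
    rw [MeasureTheory.Measure.volume_eq_prod ℝ ℝ]
    exact integrable_h.mul_prod integrable_h
  have := integrable_h.mul_prod h2 (μ := volume) (ν := volume)
  rw [← MeasureTheory.Measure.volume_eq_prod ℝ (ℝ × ℝ)] at this
  exact this

lemma integrable_f : IntegrableOn f S := by
  apply Integrable.mono' (integrable_g.restrict (s := S)) measurable_f.aestronglyMeasurable
  rw [ae_restrict_iff' measurableSet_S]
  apply ae_of_all
  intro x hx
  obtain ⟨h1, h2, h3⟩ := mem_S.1 hx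
  rw [Real.norm_eq_abs, abs_of_nonneg (f_nonneg hx)]
  by_cases hle : x.1 ≤ 1 ∧ x.2.1 ≤ 1 ∧ x.2.2 ≤ 1
  · have e1 : h x.1 = x.1 ^ (-(2:ℝ)/3) :=
      Set.indicator_of_mem (Set.mem_Ioc.2 ⟨h1, hle.1⟩) _
    have e2 : h x.2.1 = x.2.1 ^ (-(2:ℝ)/3) :=
      Set.indicator_of_mem (Set.mem_Ioc.2 ⟨h2, hle.2.1⟩) _
    have e3 : h x.2.2 = x.2.2 ^ (-(2:ℝ)/3) :=
      Set.indicator_of_mem (Set.mem_Ioc.2 ⟨h3, hle.2.2⟩) _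
    rw [g, e1, e2, e3]
    exact f_le_rpow hx
  · have hfx : f x = 0 := by
      apply f_eq_zero
      rcases le_or_gt x.1 1 with ha | ha
      · rcases le_or_gt x.2.1 1 with hb | hb
        · rcases le_or_gt x.2.2 1 with hc | hc
          · exact absurd ⟨ha, hb, hc⟩ hle
          · linarith
        · linarith
      · linarith
    rw [hfx]
    exact g_nonneg x

/-! ### The step functions -/

def box (n m : ℕ) : Set ℝ := Set.Ioc (((m : ℝ) - 1)/n) (m/n)

lemma mem_box_iff {n m : ℕ} (hn : 0 < n) (hm : 1 ≤ m) {x : ℝ} (hx : 0 < x) :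
    x ∈ box n m ↔ ⌈(n : ℝ) * x⌉₊ = m := by
  have hn' : (0:ℝ) < n := by exact_mod_cast hn
  rw [box, Set.mem_Ioc, div_lt_iff₀ hn', le_div_iff₀ hn',
    Nat.ceil_eq_iff (by omega : m ≠ 0), Nat.cast_sub hm, Nat.cast_one]
  have := mul_comm x (n:ℝ)
  constructor <;> rintro ⟨ha, hb⟩ <;> exact ⟨by linarith, by linarith⟩

lemma box_subset_Ioi {n m : ℕ} (hm : 1 ≤ m) : box n m ⊆ Set.Ioi 0 := by
  intro x hx
  rcases hx with ⟨ha, _⟩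
  have h0 : (0:ℝ) ≤ ((m : ℝ) - 1)/n := by
    apply div_nonneg _ (Nat.cast_nonneg n)
    simp only [sub_nonneg]
    exact_mod_cast hm
  exact lt_of_le_of_lt h0 ha

lemma volume_box {n m : ℕ} (hn : 0 < n) : volume (box n m) = ENNReal.ofReal (1/n) := by
  rw [box, Real.volume_Ioc]
  congr 1
  have : (n:ℝ) ≠ 0 := by positivity
  field_simp
  ring

def F (n : ℕ) (x : ℝ × ℝ × ℝ) : ℝ :=
  ∑ m ∈ Finset.Icc 1 n ×ˢ Finset.Icc 1 n ×ˢ Finset.Icc 1 n,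
    (box n m.1 ×ˢ box n m.2.1 ×ˢ box n m.2.2).indicator
      (fun _ => f ((m.1 : ℝ)/n, (m.2.1 : ℝ)/n, (m.2.2 : ℝ)/n)) x

lemma measurableSet_boxprod (n : ℕ) (m : ℕ × ℕ × ℕ) :
    MeasurableSet (box n m.1 ×ˢ box n m.2.1 ×ˢ box n m.2.2) :=
  measurableSet_Ioc.prod (measurableSet_Ioc.prod measurableSet_Ioc)

lemma measurable_F (n : ℕ) : Measurable (F n) := by
  unfold F
  apply Finset.measurable_sum
  intro m _
  exact measurable_const.indicator (measurableSet_boxprod n m)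

lemma F_nonneg (n : ℕ) (x : ℝ × ℝ × ℝ) : 0 ≤ F n x := by
  apply Finset.sum_nonneg
  intro m hm
  simp only [Finset.mem_product, Finset.mem_Icc] at hm
  apply Set.indicator_nonneg
  intro y _
  apply f_nonneg
  rw [mem_S]
  have hn : 0 < n := lt_of_lt_of_le hm.1.1 hm.1.2
  have hn' : (0:ℝ) < n := by exact_mod_cast hn
  refine ⟨?_, ?_, ?_⟩ <;>
    · apply div_pos _ hn'
      exact_mod_cast Nat.lt_of_lt_of_le Nat.zero_lt_one (by omega)

lemma F_zero (x : ℝ × ℝ × ℝ) : F 0 x = 0 := by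
  simp [F]

lemma F_eq {n : ℕ} (hn : 0 < n) {x : ℝ × ℝ × ℝ} (hx : x ∈ S) :
    F n x = if ⌈(n:ℝ) * x.1⌉₊ ≤ n ∧ ⌈(n:ℝ) * x.2.1⌉₊ ≤ n ∧ ⌈(n:ℝ) * x.2.2⌉₊ ≤ n then
      f ((⌈(n:ℝ) * x.1⌉₊ : ℝ)/n, (⌈(n:ℝ) * x.2.1⌉₊ : ℝ)/n, (⌈(n:ℝ) * x.2.2⌉₊ : ℝ)/n)
    else 0 := by
  obtain ⟨hx1, hx2, hx3⟩ := mem_S.1 hx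
  have hn' : (0:ℝ) < n := by exact_mod_cast hn
  set c : ℕ × ℕ × ℕ := (⌈(n:ℝ) * x.1⌉₊, ⌈(n:ℝ) * x.2.1⌉₊, ⌈(n:ℝ) * x.2.2⌉₊) with hc
  have hc1 : 1 ≤ c.1 := Nat.one_le_iff_ne_zero.2 (by
    simp [hc, Nat.ceil_eq_zero, not_le]; positivity)
  have hc2 : 1 ≤ c.2.1 := Nat.one_le_iff_ne_zero.2 (by
    simp [hc, Nat.ceil_eq_zero, not_le]; positivity)
  have hc3 : 1 ≤ c.2.2 := Nat.one_le_iff_ne_zero.2 (by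
    simp [hc, Nat.ceil_eq_zero, not_le]; positivity)
  have hmem : ∀ m : ℕ × ℕ × ℕ, 1 ≤ m.1 → 1 ≤ m.2.1 → 1 ≤ m.2.2 →
      (x ∈ box n m.1 ×ˢ box n m.2.1 ×ˢ box n m.2.2 ↔ m = c) := by
    intro m h1 h2 h3
    rw [Set.mem_prod, Set.mem_prod, mem_box_iff hn h1 hx1, mem_box_iff hn h2 hx2,
      mem_box_iff hn h3 hx3, hc, Prod.ext_iff, Prod.ext_iff]
    tauto
  split_ifs with hcond
  · have hcmem : c ∈ Finset.Icc 1 n ×ˢ Finset.Icc 1 n ×ˢ Finset.Icc 1 n := by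
      simp only [Finset.mem_product, Finset.mem_Icc]
      exact ⟨⟨hc1, hcond.1⟩, ⟨hc2, hcond.2.1⟩, ⟨hc3, hcond.2.2⟩⟩
    rw [F, Finset.sum_eq_single_of_mem c hcmem]
    · rw [Set.indicator_of_mem ((hmem c hc1 hc2 hc3).2 rfl)]
    · intro m hm hne
      simp only [Finset.mem_product, Finset.mem_Icc] at hm
      exact Set.indicator_of_notMem
        (fun hxm => hne ((hmem m hm.1.1 hm.2.1.1 hm.2.2.1).1 hxm)) _
  · apply Finset.sum_eq_zero
    intro m hm
    simp only [Finset.mem_product, Finset.mem_Icc] at hm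
    apply Set.indicator_of_notMem
    intro hxm
    have := (hmem m hm.1.1 hm.2.1.1 hm.2.2.1).1 hxm
    subst this
    exact hcond ⟨hm.1.2, hm.2.1.2, hm.2.2.2⟩

lemma le_ceil_div {n : ℕ} (hn : 0 < n) (y : ℝ) : y ≤ (⌈(n:ℝ) * y⌉₊ : ℝ)/n := by
  have hn' : (0:ℝ) < n := by exact_mod_cast hn
  rw [le_div_iff₀ hn']
  calc y * n = n * y := mul_comm _ _
    _ ≤ _ := Nat.le_ceil _

lemma F_le_f {n : ℕ} {x : ℝ × ℝ × ℝ} (hx : x ∈ S) : F n x ≤ f x := by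
  rcases Nat.eq_zero_or_pos n with rfl | hn
  · rw [F_zero]; exact f_nonneg hx
  rw [F_eq hn hx]
  split_ifs with hcond
  · exact f_anti hx (le_ceil_div hn _) (le_ceil_div hn _) (le_ceil_div hn _)
  · exact f_nonneg hx

lemma tendsto_ceil_div (y : ℝ) (hy : 0 ≤ y) :
    Tendsto (fun n : ℕ => (⌈(n:ℝ) * y⌉₊ : ℝ)/n) atTop (nhds y) := by
  have hupper : Tendsto (fun n : ℕ => y + 1/(n:ℝ)) atTop (nhds y) := by
    have : Tendsto (fun n : ℕ => 1/(n:ℝ)) atTop (nhds 0) := by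
      exact tendsto_one_div_atTop_nhds_zero_nat
    simpa using tendsto_const_nhds.add this
  apply tendsto_of_tendsto_of_tendsto_of_le_of_le' tendsto_const_nhds hupper
  · filter_upwards [eventually_ge_atTop 1] with n hn
    have hn' : (0:ℝ) < n := by exact_mod_cast hn
    rw [le_div_iff₀ hn']
    calc y * n = n * y := mul_comm _ _
      _ ≤ _ := Nat.le_ceil _
  · filter_upwards [eventually_ge_atTop 1] with n hn
    have hn' : (0:ℝ) < n := by exact_mod_cast hn
    rw [div_le_iff₀ hn']
    have := Nat.ceil_lt_add_one (by positivity : (0:ℝ) ≤ (n:ℝ) * y)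
    have h2 : (y + 1/n) * n = n * y + 1 := by field_simp
    linarith

lemma F_tendsto {x : ℝ × ℝ × ℝ} (hx : x ∈ S) :
    Tendsto (fun n => F n x) atTop (nhds (f x)) := by
  obtain ⟨h1, h2, h3⟩ := mem_S.1 hx
  by_cases hle : x.1 ≤ 1 ∧ x.2.1 ≤ 1 ∧ x.2.2 ≤ 1
  · have key : Tendsto (fun n : ℕ =>
        f ((⌈(n:ℝ) * x.1⌉₊ : ℝ)/n, (⌈(n:ℝ) * x.2.1⌉₊ : ℝ)/n, (⌈(n:ℝ) * x.2.2⌉₊ : ℝ)/n))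
        atTop (nhds (f x)) := by
      have hx' : Tendsto (fun n : ℕ =>
          (((⌈(n:ℝ) * x.1⌉₊ : ℝ)/n, ((⌈(n:ℝ) * x.2.1⌉₊ : ℝ)/n, (⌈(n:ℝ) * x.2.2⌉₊ : ℝ)/n)) :
            ℝ × ℝ × ℝ)) atTop (nhds (x.1, (x.2.1, x.2.2))) :=
        (tendsto_ceil_div _ h1.le).prodMk_nhds
          ((tendsto_ceil_div _ h2.le).prodMk_nhds (tendsto_ceil_div _ h3.le))
      have hxx : ((x.1, (x.2.1, x.2.2)) : ℝ × ℝ × ℝ) = x := rfl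
      rw [hxx] at hx'
      exact ((f_continuousAt hx).tendsto).comp hx'
    apply key.congr'
    filter_upwards [eventually_ge_atTop 1] with n hn
    rw [F_eq hn hx, if_pos]
    refine ⟨?_, ?_, ?_⟩ <;>
    · rw [Nat.ceil_le]
      calc (n:ℝ) * _ ≤ (n:ℝ) * 1 := by
            apply mul_le_mul_of_nonneg_left _ (Nat.cast_nonneg n)
            first | exact hle.1 | exact hle.2.1 | exact hle.2.2
        _ = n := mul_one _
  · have hfx : f x = 0 := by
      apply f_eq_zero
      rcases le_or_gt x.1 1 with ha | ha
      · rcases le_or_gt x.2.1 1 with hb | hb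
        · have := hle; push_neg at this
          have := this ha hb
          linarith
        · linarith
      · linarith
    rw [hfx]
    apply tendsto_const_nhds.congr'
    filter_upwards [eventually_ge_atTop 1] with n hn
    rw [F_eq hn hx, if_neg]
    push_neg at hle ⊢
    intro hc1 hc2
    by_contra hc3
    push_neg at hc3
    have key : ∀ y : ℝ, 0 < y → ⌈(n:ℝ) * y⌉₊ ≤ n → y ≤ 1 := by
      intro y hy hcy
      have hn' : (0:ℝ) < n := by exact_mod_cast hn
      have : (n:ℝ) * y ≤ n := by
        calc (n:ℝ) * y ≤ ⌈(n:ℝ) * y⌉₊ := Nat.le_ceil _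
          _ ≤ n := by exact_mod_cast hcy
      nlinarith
    exact absurd (key _ h3 hc3) (by
      push_neg
      exact hle (key _ h1 hc1) (key _ h2 hc2))

/-! ### The integral of the step function -/

lemma volume_boxprod {n : ℕ} (hn : 0 < n) (m : ℕ × ℕ × ℕ) :
    volume (box n m.1 ×ˢ box n m.2.1 ×ˢ box n m.2.2) =
      ENNReal.ofReal (1/n) * (ENNReal.ofReal (1/n) * ENNReal.ofReal (1/n)) := by
  rw [MeasureTheory.Measure.volume_eq_prod, Measure.prod_prod,
    MeasureTheory.Measure.volume_eq_prod, Measure.prod_prod,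
    volume_box hn, volume_box hn, volume_box hn]

lemma integral_F {n : ℕ} (hn : 0 < n) :
    ∫ x in S, F n x =
      ∑ m ∈ Finset.Icc 1 n ×ˢ Finset.Icc 1 n ×ˢ Finset.Icc 1 n,
        f ((m.1 : ℝ)/n, (m.2.1 : ℝ)/n, (m.2.2 : ℝ)/n) * (1/n * (1/n * 1/n)) := by
  unfold F
  rw [integral_finset_sum]
  · apply Finset.sum_congr rfl
    intro m hm
    simp only [Finset.mem_product, Finset.mem_Icc] at hm
    have hsub : (box n m.1 ×ˢ box n m.2.1 ×ˢ box n m.2.2) ⊆ S :=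
      Set.prod_mono (box_subset_Ioi hm.1.1)
        (Set.prod_mono (box_subset_Ioi hm.2.1.1) (box_subset_Ioi hm.2.2.1))
    rw [setIntegral_indicator (measurableSet_boxprod n m),
      Set.inter_eq_self_of_subset_right hsub, setIntegral_const, measureReal_def, volume_boxprod hn m]
    rw [smul_eq_mul, mul_comm]
    congr 1
    have h0 : (0:ℝ) ≤ 1/n := by positivity
    rw [ENNReal.toReal_mul, ENNReal.toReal_mul, ENNReal.toReal_ofReal h0]
    ring
  · intro m hm
    rw [integrable_indicator_iff (measurableSet_boxprod n m)]
    refine integrableOn_const (ne_of_lt ?_) enorm_ne_top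
    calc (volume.restrict S) (box n m.1 ×ˢ box n m.2.1 ×ˢ box n m.2.2)
        ≤ volume (box n m.1 ×ˢ box n m.2.1 ×ˢ box n m.2.2) :=
          Measure.le_iff'.1 Measure.restrict_le_self _
      _ < ⊤ := by
          rw [volume_boxprod hn m]
          exact ENNReal.mul_lt_top ENNReal.ofReal_lt_top
            (ENNReal.mul_lt_top ENNReal.ofReal_lt_top ENNReal.ofReal_lt_top)

/-! ### The combinatorial identity -/

lemma sum_eq {n : ℕ} (hn : 0 < n) :
    ((n:ℝ)^2)⁻¹ *
      ∑ q ∈ (Finset.Icc 1 n ×ˢ Finset.Icc 1 n ×ˢ Finset.Icc 1 n ×ˢ Finset.Icc 1 n).filter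
          (fun q : ℕ × ℕ × ℕ × ℕ => q.1 + q.2.1 + q.2.2.1 + q.2.2.2 ≤ n),
        (1 : ℝ) / (q.2.1 * q.2.2.1 + q.2.1 * q.2.2.2 + q.2.2.1 * q.2.2.2) =
    ∑ m ∈ Finset.Icc 1 n ×ˢ Finset.Icc 1 n ×ˢ Finset.Icc 1 n,
      f ((m.1 : ℝ)/n, (m.2.1 : ℝ)/n, (m.2.2 : ℝ)/n) * (1/n * (1/n * 1/n)) := by
  rw [Finset.sum_filter, Finset.sum_product, Finset.sum_comm, Finset.mul_sum]
  apply Finset.sum_congr rfl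
  intro m hm
  simp only [Finset.mem_product, Finset.mem_Icc] at hm
  obtain ⟨⟨ha1, ha2⟩, ⟨hb1, hb2⟩, ⟨hc1, hc2⟩⟩ := hm
  set a := m.1; set b := m.2.1; set c := m.2.2
  have hinner : ∑ k ∈ Finset.Icc 1 n,
      (if k + a + b + c ≤ n then
        (1 : ℝ) / (a * b + a * c + b * c) else 0) =
      ((n - (a + b + c) : ℕ) : ℝ) * ((1 : ℝ) / (a * b + a * c + b * c)) := by
    rw [← Finset.sum_filter]
    have hfil : (Finset.Icc 1 n).filter (fun k => k + a + b + c ≤ n) =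
        Finset.Icc 1 (n - (a + b + c)) := by
      ext k
      simp only [Finset.mem_filter, Finset.mem_Icc]
      omega
    rw [hfil, Finset.sum_const, Nat.card_Icc, nsmul_eq_mul]
    norm_num
  rw [hinner]
  have hn' : (0:ℝ) < n := by exact_mod_cast hn
  have hA : (1:ℝ) ≤ a := by exact_mod_cast ha1
  have hB : (1:ℝ) ≤ b := by exact_mod_cast hb1
  have hC : (1:ℝ) ≤ c := by exact_mod_cast hc1
  have hQ : (0:ℝ) < (a:ℝ) * b + a * c + b * c := by nlinarith
  by_cases hs : a + b + c ≤ n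
  · have hcast : ((n - (a + b + c) : ℕ) : ℝ) = (n:ℝ) - ((a:ℝ) + b + c) := by
      push_cast [hs]
      ring
    have hsR : (a:ℝ) + b + c ≤ n := by exact_mod_cast hs
    rw [hcast, f]
    have hmax : max (1 - ((a:ℝ)/n + (b:ℝ)/n + (c:ℝ)/n)) 0
        = 1 - ((a:ℝ)/n + (b:ℝ)/n + (c:ℝ)/n) := by
      apply max_eq_left
      have hd : ((a:ℝ) + b + c)/n ≤ 1 := by
        rw [div_le_one hn']; exact hsR
      have h' : ((a:ℝ)/n + (b:ℝ)/n + (c:ℝ)/n) = ((a:ℝ) + b + c)/n := by ring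
      rw [h']; linarith
    rw [hmax]
    have hQn : (a:ℝ)/n * ((b:ℝ)/n) + (a:ℝ)/n * ((c:ℝ)/n) + (b:ℝ)/n * ((c:ℝ)/n) ≠ 0 := by
      have he : (a:ℝ)/n * ((b:ℝ)/n) + (a:ℝ)/n * ((c:ℝ)/n) + (b:ℝ)/n * ((c:ℝ)/n)
          = ((a:ℝ) * b + a * c + b * c) / n^2 := by ring
      rw [he]
      positivity
    field_simp
  · have h0 : ((n - (a + b + c) : ℕ) : ℝ) = 0 := by
      have hz : n - (a + b + c) = 0 := by omega
      rw [hz, Nat.cast_zero]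
    rw [h0, zero_mul, mul_zero, f]
    have hmax : max (1 - ((a:ℝ)/n + (b:ℝ)/n + (c:ℝ)/n)) 0 = 0 := by
      apply max_eq_right
      have hsR : (n:ℝ) < (a:ℝ) + b + c := by exact_mod_cast Nat.lt_of_not_le hs
      have hd : 1 < ((a:ℝ) + b + c)/n := by
        rw [lt_div_iff₀ hn']; linarith
      have h' : ((a:ℝ)/n + (b:ℝ)/n + (c:ℝ)/n) = ((a:ℝ) + b + c)/n := by ring
      rw [h']; linarith
    rw [hmax, zero_div, zero_mul]

/-! ### Identification of the limit integral -/

lemma integral_eq :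
    (∫ p in (Set.Icc 0 1 ×ˢ Set.Icc 0 1 ×ˢ Set.Icc 0 1 : Set (ℝ × ℝ × ℝ)),
      if p.1 + p.2.1 + p.2.2 ≤ 1 then
        (1 - (p.1 + p.2.1 + p.2.2)) / (p.1 * p.2.1 + p.1 * p.2.2 + p.2.1 * p.2.2)
      else 0) = ∫ x in S, f x := by
  have hIcc : MeasurableSet (Set.Icc 0 1 ×ˢ Set.Icc 0 1 ×ˢ Set.Icc 0 1 : Set (ℝ × ℝ × ℝ)) :=
    measurableSet_Icc.prod (measurableSet_Icc.prod measurableSet_Icc)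
  rw [← integral_indicator hIcc, ← integral_indicator measurableSet_S]
  apply integral_congr_ae
  have hZ1 : volume {p : ℝ × ℝ × ℝ | p.1 = 0} = 0 := by
    have he : {p : ℝ × ℝ × ℝ | p.1 = 0} = ({0} : Set ℝ) ×ˢ (Set.univ : Set (ℝ × ℝ)) := by
      ext ⟨x, y, z⟩; simp [Prod.ext_iff, eq_comm]
    rw [he, MeasureTheory.Measure.volume_eq_prod, Measure.prod_prod]
    simp
  have hZ2 : volume {p : ℝ × ℝ × ℝ | p.2.1 = 0} = 0 := by
    have he : {p : ℝ × ℝ × ℝ | p.2.1 = 0} =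
        (Set.univ : Set ℝ) ×ˢ (({0} : Set ℝ) ×ˢ (Set.univ : Set ℝ)) := by
      ext ⟨x, y, z⟩; simp [Prod.ext_iff, eq_comm]
    rw [he, MeasureTheory.Measure.volume_eq_prod, Measure.prod_prod,
      MeasureTheory.Measure.volume_eq_prod, Measure.prod_prod]
    simp
  have hZ3 : volume {p : ℝ × ℝ × ℝ | p.2.2 = 0} = 0 := by
    have he : {p : ℝ × ℝ × ℝ | p.2.2 = 0} =
        (Set.univ : Set ℝ) ×ˢ ((Set.univ : Set ℝ) ×ˢ ({0} : Set ℝ)) := by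
      ext ⟨x, y, z⟩; simp [Prod.ext_iff, eq_comm]
    rw [he, MeasureTheory.Measure.volume_eq_prod, Measure.prod_prod,
      MeasureTheory.Measure.volume_eq_prod, Measure.prod_prod]
    simp
  have hae : ∀ᵐ p : ℝ × ℝ × ℝ, p.1 ≠ 0 ∧ p.2.1 ≠ 0 ∧ p.2.2 ≠ 0 := by
    have a1 : ∀ᵐ p : ℝ × ℝ × ℝ, p.1 ≠ 0 := by
      rw [ae_iff]; simpa using hZ1
    have a2 : ∀ᵐ p : ℝ × ℝ × ℝ, p.2.1 ≠ 0 := by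
      rw [ae_iff]; simpa using hZ2
    have a3 : ∀ᵐ p : ℝ × ℝ × ℝ, p.2.2 ≠ 0 := by
      rw [ae_iff]; simpa using hZ3
    exact a1.and (a2.and a3)
  filter_upwards [hae] with p hp
  obtain ⟨hp1, hp2, hp3⟩ := hp
  by_cases hpos : 0 < p.1 ∧ 0 < p.2.1 ∧ 0 < p.2.2
  · obtain ⟨h1, h2, h3⟩ := hpos
    have hpS : p ∈ S := mem_S.2 ⟨h1, h2, h3⟩
    rw [Set.indicator_of_mem hpS]
    by_cases hIn : p ∈ (Set.Icc 0 1 ×ˢ Set.Icc 0 1 ×ˢ Set.Icc 0 1 : Set (ℝ × ℝ × ℝ))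
    · rw [Set.indicator_of_mem hIn]
      by_cases hs : p.1 + p.2.1 + p.2.2 ≤ 1
      · rw [if_pos hs, f, max_eq_left (by linarith)]
      · rw [if_neg hs, f_eq_zero (by linarith [not_le.1 hs])]
    · rw [Set.indicator_of_notMem hIn]
      have hgt : 1 < p.1 + p.2.1 + p.2.2 := by
        simp only [Set.mem_prod, Set.mem_Icc, not_and_or] at hIn
        rcases hIn with (h | h | h) <;> rcases h with h' | h' <;> push_neg at h' <;> linarith
      rw [f_eq_zero hgt]
  · have hpS : p ∉ S := fun hc => hpos (mem_S.1 hc)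
    rw [Set.indicator_of_notMem hpS]
    have hIn : p ∉ (Set.Icc 0 1 ×ˢ Set.Icc 0 1 ×ˢ Set.Icc 0 1 : Set (ℝ × ℝ × ℝ)) := by
      intro hc
      simp only [Set.mem_prod, Set.mem_Icc] at hc
      apply hpos
      exact ⟨lt_of_le_of_ne hc.1.1 (Ne.symm hp1),
        lt_of_le_of_ne hc.2.1.1 (Ne.symm hp2), lt_of_le_of_ne hc.2.2.1 (Ne.symm hp3)⟩
    rw [Set.indicator_of_notMem hIn]

end SumInvJ

open SumInvJ in
/-- Asymptotics of the Gaussian main term `A₂,₀`: the normalized sum of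
`1/(m₀m₁ + m₀m₂ + m₁m₂)` over quadruples of positive integers with
`k₁ + m₀ + m₁ + m₂ ≤ n` converges to the constant
`J = ∫_{[0,1]³} (1 − (u+v+w))·𝟙_{u+v+w ≤ 1}/(uv+uw+vw) du dv dw`. -/
theorem sum_inv_sym_tendsto_J :
    Tendsto
      (fun n : ℕ =>
        ((n : ℝ) ^ 2)⁻¹ *
          ∑ q ∈ (Finset.Icc 1 n ×ˢ Finset.Icc 1 n ×ˢ Finset.Icc 1 n ×ˢ Finset.Icc 1 n).filter
              (fun q : ℕ × ℕ × ℕ × ℕ => q.1 + q.2.1 + q.2.2.1 + q.2.2.2 ≤ n),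
            (1 : ℝ) / (q.2.1 * q.2.2.1 + q.2.1 * q.2.2.2 + q.2.2.1 * q.2.2.2))
      atTop
      (nhds (∫ p in (Set.Icc 0 1 ×ˢ Set.Icc 0 1 ×ˢ Set.Icc 0 1 : Set (ℝ × ℝ × ℝ)),
        if p.1 + p.2.1 + p.2.2 ≤ 1 then
          (1 - (p.1 + p.2.1 + p.2.2)) / (p.1 * p.2.1 + p.1 * p.2.2 + p.2.1 * p.2.2)
        else 0)) := by
  rw [integral_eq]
  have hDCT : Tendsto (fun n => ∫ x in S, F n x) atTop (nhds (∫ x in S, f x)) := by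
    apply MeasureTheory.tendsto_integral_of_dominated_convergence f
      (fun n => (measurable_F n).aestronglyMeasurable) integrable_f
    · intro n
      rw [ae_restrict_iff' measurableSet_S]
      apply ae_of_all
      intro x hx
      rw [Real.norm_eq_abs, abs_of_nonneg (F_nonneg n x)]
      exact F_le_f hx
    · rw [ae_restrict_iff' measurableSet_S]
      apply ae_of_all
      intro x hx
      exact F_tendsto hx
  apply hDCT.congr'
  filter_upwards [eventually_ge_atTop 1] with n hn
  exact (integral_F hn).trans (sum_eq hn).symm
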